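/- Let q = (−u, 0) ∈ M̃ with 0 < u < t₀, let ν ∈ (inf m, m(u)), and let α_ν, β_ν, s₂, s₂⁺ be as follows: α_ν and β_ν are the unit-speed geodesics from q with Clairaut constant ν and t'(α_ν)(0) < 0 < t'(β_ν)(0), s₂ := min{s > 0 : t(α_ν(s)) = u}, s₁⁺ := min{s > 0 : t(β_ν(s)) = ξ(ν)}, s₂⁺ := min{s > s₁⁺ : t(β_ν(s)) = u}. Then the lengths of the segments α_ν|[0, s₂] and β_ν|[0, s₂⁺] are equal, and both equal l(ν) := 2∫_{−ξ(ν)}^{0} m(t)/√(m(t)² − ν²) dt; in particular s₂ = s₂⁺. -/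

import Mathlib

open Real Set

noncomputable section

/-- Length of a C¹ curve `c` on `[a,b]` in the warped product metric
`ds² = dt² + m(t)² dθ²` on `M̃ = ℝ²` (coordinates `(t,θ)`). -/
def wLength (m : ℝ → ℝ) (c : ℝ → ℝ × ℝ) (a b : ℝ) : ℝ :=
  ∫ s in a..b,
    Real.sqrt ((deriv (fun u => (c u).1) s) ^ 2 +
      (m (c s).1) ^ 2 * (deriv (fun u => (c u).2) s) ^ 2)

/-- The Riemannian distance on `M̃`: the infimum of lengths of C¹ curves joining `p` to `q`. -/
def wDist (m : ℝ → ℝ) (p q : ℝ × ℝ) : ℝ :=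
  sInf {L : ℝ | ∃ c : ℝ → ℝ × ℝ, ∃ b : ℝ, 0 ≤ b ∧ ContDiff ℝ 1 c ∧
    c 0 = p ∧ c b = q ∧ L = wLength m c 0 b}

/-- `γ = (t(s), θ(s))` is a unit-speed geodesic of the warped product metric:
`t'' = m(t) m'(t) θ'²`, `m(t)² θ'` is constant, and `t'² + m(t)² θ'² = 1`. -/
def IsUnitGeodesic (m : ℝ → ℝ) (γ : ℝ → ℝ × ℝ) : Prop :=
  ContDiff ℝ 2 γ ∧
  (∀ s, deriv (deriv fun u => (γ u).1) s =
      m (γ s).1 * deriv m (γ s).1 * (deriv (fun u => (γ u).2) s) ^ 2) ∧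
  (∃ ν : ℝ, ∀ s, m (γ s).1 ^ 2 * deriv (fun u => (γ u).2) s = ν) ∧
  (∀ s, (deriv (fun u => (γ u).1) s) ^ 2 +
      m (γ s).1 ^ 2 * (deriv (fun u => (γ u).2) s) ^ 2 = 1)

/-- `ν` is the Clairaut constant of the geodesic `γ`: `m(t(s))² θ'(s) = ν` for all `s`. -/
def HasClairaut (m : ℝ → ℝ) (γ : ℝ → ℝ × ℝ) (ν : ℝ) : Prop :=
  ∀ s, m (γ s).1 ^ 2 * deriv (fun u => (γ u).2) s = ν

/-- The (unit-speed) geodesic segment `γ|[0,a]` is minimal: its length `a` equals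
the distance between its endpoints. -/
def IsMinimalSeg (m : ℝ → ℝ) (γ : ℝ → ℝ × ℝ) (a : ℝ) : Prop :=
  wDist m (γ 0) (γ a) = a

/-- `x` is a cut point of `p`: the endpoint of some minimal geodesic segment from `p`
no extension of which is minimal. -/
def IsCutPoint (m : ℝ → ℝ) (p x : ℝ × ℝ) : Prop :=
  ∃ γ : ℝ → ℝ × ℝ, ∃ a : ℝ, IsUnitGeodesic m γ ∧ γ 0 = p ∧ 0 < a ∧ γ a = x ∧
    IsMinimalSeg m γ a ∧ ∀ ε > 0, ¬ IsMinimalSeg m γ (a + ε)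

/-- The cut locus of `p` in `M̃`. -/
def cutLocus (m : ℝ → ℝ) (p : ℝ × ℝ) : Set (ℝ × ℝ) := {x | IsCutPoint m p x}

/-- The Gaussian curvature `K(t) = -m''(t)/m(t)` of the warped product metric. -/
def gaussK (m : ℝ → ℝ) (t : ℝ) : ℝ := -(deriv (deriv m) t) / m t

/-- `ξ(ν) := min {t > 0 | m t = ν}`. -/
def xi (m : ℝ → ℝ) (ν : ℝ) : ℝ := sInf {t : ℝ | 0 < t ∧ m t = ν}

/-- `φ(ν) := 2∫₀^{ξ(ν)} ν / (m(t) √(m(t)² - ν²)) dt`. -/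
def phi (m : ℝ → ℝ) (ν : ℝ) : ℝ :=
  2 * ∫ t in (0:ℝ)..(xi m ν), ν / (m t * Real.sqrt ((m t) ^ 2 - ν ^ 2))

/-- `l(ν) := 2∫_{-ξ(ν)}^{0} m(t) / √(m(t)² - ν²) dt`. -/
def ell (m : ℝ → ℝ) (ν : ℝ) : ℝ :=
  2 * ∫ t in (-(xi m ν))..(0:ℝ), m t / Real.sqrt ((m t) ^ 2 - ν ^ 2)

/-- `inf m`. -/
def infm (m : ℝ → ℝ) : ℝ := ⨅ t : ℝ, m t

/-- `t₀ := sup {t > 0 | m'(t) < 0}`. -/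
def tZero (m : ℝ → ℝ) : ℝ := sSup {t : ℝ | 0 < t ∧ deriv m t < 0}

namespace S14

open MeasureTheory intervalIntegral

lemma const_Ico {h : ℝ → ℝ} {a b : ℝ} (hab : a ≤ b)
    (hc : ContinuousOn h (Icc a b)) (hd : ∀ x ∈ Ico a b, HasDerivAt h 0 x) :
    h b = h a :=
  constant_of_has_deriv_right_zero hc (fun x hx => (hd x hx).hasDerivWithinAt) b
    (right_mem_Icc.2 hab)

lemma const_Ioc {h : ℝ → ℝ} {a b : ℝ} (hab : a ≤ b)
    (hc : ContinuousOn h (Icc a b)) (hd : ∀ x ∈ Ioc a b, HasDerivAt h 0 x) :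
    h b = h a := by
  have key := const_Ico (h := fun x => h (a + b - x)) hab ?_ ?_
  · simpa using key.symm
  · have hmaps : MapsTo (fun x : ℝ => a + b - x) (Icc a b) (Icc a b) := by
      intro x hx; simp only [mem_Icc] at hx ⊢; constructor <;> linarith [hx.1, hx.2]
    exact hc.comp ((continuous_const.sub continuous_id).continuousOn) hmaps
  · intro x hx
    have h1 : a + b - x ∈ Ioc a b := ⟨by simp only [mem_Ico] at hx; linarith [hx.2],
      by simp only [mem_Ico] at hx; linarith [hx.1]⟩
    have h2 := (hd _ h1).comp x ((hasDerivAt_id x).const_sub (a + b))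
    have h3 : HasDerivAt (fun x => h (a + b - x)) (0 * -1) x := h2
    rwa [zero_mul] at h3

section M

variable {m : ℝ → ℝ} (hm : ContDiff ℝ (⊤:ℕ∞) m) (hmpos : ∀ t, 0 < m t)
  (hmeven : ∀ t, m (-t) = m t)

include hm in
lemma m_cont : Continuous m := hm.continuous

include hm in
lemma m_diff : Differentiable ℝ m :=
  hm.differentiable (by simp)

include hm in
lemma m'_cont : Continuous (deriv m) :=
  hm.continuous_deriv (by rw [← WithTop.coe_one]; exact WithTop.coe_le_coe.2 le_top)

include hm in
lemma m'_diff : Differentiable ℝ (deriv m) := by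
  have h2 : ContDiff ℝ ((1:WithTop ℕ∞)+1) m :=
    hm.of_le (by rw [← WithTop.coe_one, ← WithTop.coe_add]; exact WithTop.coe_le_coe.2 le_top)
  exact ((contDiff_succ_iff_deriv.1 h2).2.2).differentiable one_ne_zero

include hmeven in
lemma m'_odd (t : ℝ) : deriv m (-t) = -deriv m t := by
  have h1 : deriv (fun x => m (-x)) t = -deriv m (-t) := deriv_comp_neg m t
  have h2 : (fun x => m (-x)) = m := funext hmeven
  rw [h2] at h1; linarith

include hmeven in
lemma m'_zero : deriv m 0 = 0 := by
  have := m'_odd hmeven 0; rw [neg_zero] at this; linarith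

include hmpos in
lemma m''_eq (t : ℝ) : deriv (deriv m) t = -(gaussK m t) * m t := by
  have h := (hmpos t).ne'
  rw [gaussK, neg_div, neg_neg, div_mul_cancel₀ _ h]

variable (hKdec : AntitoneOn (gaussK m) (Ici 0))
  (hne : {t : ℝ | 0 < t ∧ deriv m t < 0}.Nonempty)

include hm hmpos hmeven hKdec hne in
lemma m'_neg : ∀ c, 0 < c → c < tZero m → deriv m c < 0 := by
  intro c hc0 hct
  by_contra hcon
  push_neg at hcon
  rcases le_or_gt (gaussK m c) 0 with hKc | hKc
  · have hmono : MonotoneOn (deriv m) (Ici c) := by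
      apply monotoneOn_of_deriv_nonneg (convex_Ici c) (m'_cont hm).continuousOn
        ((m'_diff hm).differentiableOn)
      intro x hx
      rw [interior_Ici] at hx
      have hKx : gaussK m x ≤ gaussK m c := hKdec hc0.le (hc0.trans hx).le hx.le
      rw [m''_eq hmpos]
      nlinarith [hmpos x]
    obtain ⟨t, ht, hct'⟩ := exists_lt_of_lt_csSup hne hct
    have := hmono (le_refl c : c ∈ Ici c) (le_of_lt hct' : t ∈ Ici c) hct'.le
    linarith [ht.2]
  · have hanti : StrictAntiOn (deriv m) (Icc 0 c) := by
      apply strictAntiOn_of_deriv_neg (convex_Icc 0 c) (m'_cont hm).continuousOn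
      intro x hx
      rw [interior_Icc] at hx
      have hKx : gaussK m c ≤ gaussK m x := hKdec hx.1.le hc0.le hx.2.le
      rw [m''_eq hmpos]
      nlinarith [hmpos x]
    have := hanti ⟨le_rfl, hc0.le⟩ ⟨hc0.le, le_rfl⟩ hc0
    rw [m'_zero hmeven] at this
    linarith

include hne in
lemma t0_pos (hbdd : BddAbove {t : ℝ | 0 < t ∧ deriv m t < 0}) : 0 < tZero m := by
  obtain ⟨w, hw⟩ := hne
  exact lt_of_lt_of_le hw.1 (le_csSup hbdd hw)


include hm hmpos hmeven hKdec hne in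
lemma m_anti : StrictAntiOn m (Icc 0 (tZero m)) := by
  apply strictAntiOn_of_deriv_neg (convex_Icc _ _) (m_cont hm).continuousOn
  intro x hx
  rw [interior_Icc] at hx
  exact m'_neg hm hmpos hmeven hKdec hne x hx.1 hx.2

include hm hne in
lemma m_mono (hbdd : BddAbove {t : ℝ | 0 < t ∧ deriv m t < 0}) :
    MonotoneOn m (Ici (tZero m)) := by
  apply monotoneOn_of_deriv_nonneg (convex_Ici _) (m_cont hm).continuousOn
    ((m_diff hm).differentiableOn)
  intro x hx
  rw [interior_Ici] at hx
  by_contra hcon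
  push_neg at hcon
  have hx' : tZero m < x := hx
  have hx0 : 0 < x := by
    obtain ⟨w, hw⟩ := hne
    have hwle : w ≤ tZero m := le_csSup hbdd hw
    linarith [hw.1]
  exact absurd (le_csSup hbdd ⟨hx0, hcon⟩ : _ ≤ tZero m) (not_le.2 hx')

variable {ν : ℝ} (hν₁ : infm m < ν)

include hm hmpos hmeven hKdec hne hν₁ in
lemma m_t0_lt (hbdd : BddAbove {t : ℝ | 0 < t ∧ deriv m t < 0}) : m (tZero m) < ν := by
  obtain ⟨w, hw⟩ := exists_lt_of_ciInf_lt hν₁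
  have hweq : m |w| = m w := by
    rcases abs_cases w with h | h
    · rw [h.1]
    · rw [h.1, hmeven]
  have ht0 : 0 ≤ tZero m := (t0_pos hne hbdd).le
  rcases le_or_gt |w| (tZero m) with h | h
  · have : m (tZero m) ≤ m |w| :=
      (m_anti hm hmpos hmeven hKdec hne).antitoneOn ⟨abs_nonneg w, h⟩
        ⟨ht0, le_rfl⟩ h
    rw [hweq] at this; linarith
  · have : m (tZero m) ≤ m |w| := m_mono hm hne hbdd (le_refl (tZero m) : tZero m ∈ Ici (tZero m)) h.le h.le
    rw [hweq] at this; linarith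

variable (hν₀ : 0 < ν)

include hm hmpos hmeven hKdec hne hν₁ in
lemma xi_spec (hbdd : BddAbove {t : ℝ | 0 < t ∧ deriv m t < 0})
    {u : ℝ} (hu : 0 < u) (hut : u < tZero m) (hν₂ : ν < m u) :
    m (xi m ν) = ν ∧ u < xi m ν ∧ xi m ν < tZero m := by
  have hIVT := intermediate_value_Ioo' hut.le (m_cont hm).continuousOn
    (a := u) (b := tZero m)
  have hmem : ν ∈ Ioo (m (tZero m)) (m u) :=
    ⟨m_t0_lt hm hmpos hmeven hKdec hne hν₁ hbdd, hν₂⟩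
  obtain ⟨c, hc1, hc2⟩ := hIVT hmem
  have hanti := m_anti hm hmpos hmeven hKdec hne
  have hleast : IsLeast {t : ℝ | 0 < t ∧ m t = ν} c := by
    constructor
    · exact ⟨hu.trans hc1.1, hc2⟩
    · rintro t ⟨ht0, htν⟩
      by_contra hlt
      push_neg at hlt
      have : m c < m t := hanti ⟨ht0.le, (hlt.trans hc1.2).le⟩
        ⟨(hu.trans hc1.1).le, hc1.2.le⟩ hlt
      rw [hc2, htν] at this
      exact lt_irrefl _ this
  have hxi : xi m ν = c := hleast.csInf_eq
  rw [hxi]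
  exact ⟨hc2, hc1.1, hc1.2⟩


section F

variable (hν₀ : 0 < ν) {ξ : ℝ} (hξ0 : 0 < ξ) (hmξ : m ξ = ν) (hm'ξ : deriv m ξ < 0)
  (hmgt : ∀ t, |t| < ξ → ν < m t)

include hm hν₀ hmgt in
lemma f_contAt {t : ℝ} (ht : |t| < ξ) :
    ContinuousAt (fun t => m t / Real.sqrt ((m t)^2 - ν^2)) t := by
  have hpos : 0 < (m t)^2 - ν^2 := by nlinarith [hmgt t ht]
  have hden : Real.sqrt ((m t)^2 - ν^2) ≠ 0 := (Real.sqrt_pos.2 hpos).ne'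
  exact ((m_cont hm).continuousAt).div
    ((continuous_sqrt.comp (((m_cont hm).pow 2).sub continuous_const)).continuousAt) hden

include hm hmpos hmeven hν₀ hξ0 hmξ hm'ξ hmgt in
lemma f_int : IntervalIntegrable (fun t => m t / Real.sqrt ((m t)^2 - ν^2))
    volume (-ξ) ξ := by
  set f : ℝ → ℝ := fun t => m t / Real.sqrt ((m t)^2 - ν^2) with hf
  have hfeven : ∀ t, f (-t) = f t := by intro t; simp only [hf, hmeven]
  have hfnonneg : ∀ t, 0 ≤ f t := fun t =>
    div_nonneg (hmpos t).le (Real.sqrt_nonneg _)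
  have hfmeas : Measurable f :=
    (m_cont hm).measurable.div
      (continuous_sqrt.comp (((m_cont hm).pow 2).sub continuous_const)).measurable
  -- the left endpoint data
  have hme : m (-ξ) = ν := by rw [hmeven]; exact hmξ
  set a : ℝ := -(ν * deriv m ξ) with ha
  have ha0 : 0 < a := by nlinarith
  set W' : ℝ → ℝ := fun t => 2 * m t * deriv m t with hW'
  have hW'c : Continuous W' :=
    (continuous_const.mul (m_cont hm)).mul (m'_cont hm)
  have hW'e : W' (-ξ) = 2 * a := by
    rw [hW']; simp only [hme, m'_odd hmeven]; ring
  have hev : ∀ᶠ t in nhds (-ξ), a < W' t := by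
    have h2 : a < W' (-ξ) := by rw [hW'e]; linarith
    exact hW'c.continuousAt.eventually_const_lt h2
  rw [Metric.eventually_nhds_iff] at hev
  obtain ⟨δ0, hδ0, hball⟩ := hev
  set δ : ℝ := min (δ0/2) ξ with hδ
  have hδpos : 0 < δ := lt_min (by linarith) hξ0
  have hδξ : δ ≤ ξ := min_le_right _ _
  have hle1 : -ξ ≤ -ξ + δ := by linarith
  -- bound for m on the small interval
  obtain ⟨tM, _, hMax⟩ := (isCompact_Icc (a := -ξ) (b := -ξ + δ)).exists_isMaxOn
    (nonempty_Icc.2 hle1) (m_cont hm).continuousOn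
  have hMspec : ∀ t ∈ Icc (-ξ) (-ξ+δ), m t ≤ m tM := fun t ht => hMax ht
  have hMpos : 0 < m tM := hmpos tM
  -- derivative facts for w t = m t ^ 2 - ν ^ 2
  have hwderiv : ∀ x : ℝ, HasDerivAt (fun y => m y ^ 2 - ν ^ 2) (W' x) x := by
    intro x
    have := (((m_diff hm) x).hasDerivAt.pow 2).sub_const (ν^2)
    simpa [hW', pow_one] using this
  -- pointwise bound on Ioc (-ξ) (-ξ+δ)
  have hwlb : ∀ t ∈ Ioc (-ξ) (-ξ+δ), a * (t + ξ) ≤ m t ^ 2 - ν ^ 2 := by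
    rintro t ⟨ht1, ht2⟩
    obtain ⟨η, hη, hslope⟩ := exists_hasDerivAt_eq_slope (fun y => m y ^ 2 - ν ^ 2) W'
      ht1 ((((m_cont hm).pow 2).sub continuous_const)).continuousOn
      (fun x _ => hwderiv x)
    have hηball : dist η (-ξ) < δ0 := by
      rw [Real.dist_eq, abs_of_nonneg (by linarith [hη.1] : (0:ℝ) ≤ η - -ξ)]
      have : η < -ξ + δ := lt_of_lt_of_le hη.2 ht2
      have hδhalf : δ ≤ δ0/2 := min_le_left _ _
      linarith
    have haW : a < W' η := hball hηball
    have hm0 : m (-ξ) ^ 2 - ν ^ 2 = 0 := by rw [hme]; ring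
    rw [hm0, sub_zero] at hslope
    have htpos : 0 < t + ξ := by linarith
    have : W' η * (t + ξ) = m t ^ 2 - ν ^ 2 := by
      rw [hslope]; field_simp; ring
    nlinarith
  -- integrable comparison function
  have hrpow : IntervalIntegrable (fun x : ℝ => x ^ (-(1/2) : ℝ)) volume 0 δ :=
    intervalIntegrable_rpow' (by norm_num)
  have hg0 := hrpow.comp_add_right ξ
  have he1 : (0:ℝ) - ξ = -ξ := by ring
  have he2 : δ - ξ = -ξ + δ := by ring
  rw [he1, he2] at hg0
  have hgint : IntervalIntegrable
      (fun t : ℝ => (m tM / Real.sqrt a) * ((t + ξ) ^ (-(1/2) : ℝ)))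
      volume (-ξ) (-ξ+δ) := hg0.const_mul _
  -- integrability near the left end
  have hleft : IntervalIntegrable f volume (-ξ) (-ξ+δ) := by
    rw [intervalIntegrable_iff_integrableOn_Ioc_of_le hle1]
    rw [intervalIntegrable_iff_integrableOn_Ioc_of_le hle1] at hgint
    apply hgint.mono' hfmeas.aestronglyMeasurable
    rw [ae_restrict_iff' measurableSet_Ioc]
    filter_upwards with t ht
    have htpos : 0 < t + ξ := by linarith [ht.1]
    have hwt := hwlb t ht
    have h1 : Real.sqrt (a * (t + ξ)) ≤ Real.sqrt (m t ^ 2 - ν ^ 2) :=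
      Real.sqrt_le_sqrt hwt
    have h2 : 0 < Real.sqrt (a * (t + ξ)) := Real.sqrt_pos.2 (by positivity)
    have hb : f t ≤ m tM / Real.sqrt (a * (t + ξ)) := by
      apply div_le_div₀ hMpos.le (hMspec t ⟨ht.1.le, ht.2⟩) h2 h1
    have heq : m tM / Real.sqrt (a * (t + ξ))
        = (m tM / Real.sqrt a) * ((t + ξ) ^ (-(1/2) : ℝ)) := by
      rw [Real.rpow_neg htpos.le, ← Real.sqrt_eq_rpow, ← div_eq_mul_inv, div_div,
        ← Real.sqrt_mul ha0.le]
    rw [Real.norm_eq_abs, abs_of_nonneg (hfnonneg t)]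
    rw [heq] at hb
    exact hb
  -- right end by evenness
  have hright : IntervalIntegrable f volume (ξ - δ) ξ := by
    have h1 := (IntervalIntegrable.iff_comp_neg (by simp)).mp hleft
    have h2 : (fun x => f (-x)) = f := funext hfeven
    rw [h2] at h1
    have e1 : -(-ξ) = ξ := by ring
    have e2 : -(-ξ + δ) = ξ - δ := by ring
    rw [e1, e2] at h1
    exact h1.symm
  -- middle
  have hmid : IntervalIntegrable f volume (-ξ+δ) (ξ-δ) := by
    rcases le_or_gt (-ξ+δ) (ξ-δ) with hle | hlt
    · apply ContinuousOn.intervalIntegrable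
      intro t ht
      rw [uIcc_of_le hle] at ht
      have : |t| < ξ := by
        rw [abs_lt]; constructor <;> [linarith [ht.1]; linarith [ht.2]]
      exact ((f_contAt hm hν₀ hmgt this).continuousWithinAt)
    · apply ContinuousOn.intervalIntegrable
      intro t ht
      rw [uIcc_of_ge hlt.le] at ht
      have : |t| < ξ := by
        rw [abs_lt]; constructor <;> [linarith [ht.1]; linarith [ht.2]]
      exact ((f_contAt hm hν₀ hmgt this).continuousWithinAt)
  exact (hleft.trans hmid).trans hright

end F

end M

section GEN

variable {m : ℝ → ℝ} (hm : ContDiff ℝ (⊤:ℕ∞) m) (hmpos : ∀ t, 0 < m t)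
  (hmeven : ∀ t, m (-t) = m t)
  {ν ξ : ℝ} (hν₀ : 0 < ν) (hξ0 : 0 < ξ) (hmξ : m ξ = ν)
  (hmgt : ∀ t, |t| < ξ → ν < m t)
  (hmlt : ∃ ξ', ξ < ξ' ∧ ∀ t ∈ Ioc ξ ξ', m t < ν)
  {T : ℝ → ℝ} (hTc : Continuous T) (hT'c : Continuous (deriv T))
  (hThas : ∀ s, HasDerivAt T (deriv T s) s)
  (hsq : ∀ s, (m (T s))^2 * (deriv T s)^2 = (m (T s))^2 - ν^2)

include hmpos hν₀ hsq in
lemma gen_mT : ∀ s, ν ≤ m (T s) := by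
  intro s
  have h := hsq s
  nlinarith [sq_nonneg (m (T s) * deriv T s), hmpos (T s)]

include hmpos hν₀ hsq in
lemma gen_T'zero : ∀ s, deriv T s = 0 → m (T s) = ν := by
  intro s h
  have h2 := hsq s
  rw [h] at h2
  nlinarith [hmpos (T s)]

include hmpos hν₀ hmgt hsq in
lemma gen_T'ne : ∀ s, |T s| < ξ → deriv T s ≠ 0 := by
  intro s h hc
  exact absurd (gen_T'zero hmpos hν₀ hsq s hc) (ne_of_gt (hmgt _ h))

include hmpos hmeven hν₀ hmgt hmlt hTc hsq in
lemma gen_conf (hx : T 0 ∈ Ioo (-ξ) ξ) : ∀ s, T s ∈ Icc (-ξ) ξ := by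
  intro s
  obtain ⟨ξ', hξξ', hξ'lt⟩ := hmlt
  by_contra hc
  rw [mem_Icc] at hc
  push_neg at hc
  have hge := gen_mT hmpos hν₀ hsq
  have hIVT := intermediate_value_uIcc (a := (0:ℝ)) (b := s) (hTc.continuousOn)
  rcases lt_or_ge (T s) (-ξ) with h1 | h1
  · set z := max (T s) (-ξ') with hz
    have hz1 : z < -ξ := max_lt h1 (by linarith)
    have hz2 : -ξ' ≤ z := le_max_right _ _
    have hmz : m z < ν := by
      have hmem : -z ∈ Ioc ξ ξ' := ⟨by linarith, by linarith⟩
      have := hξ'lt _ hmem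
      rwa [hmeven] at this
    have hzmem : z ∈ uIcc (T 0) (T s) := by
      rw [mem_uIcc]; right
      exact ⟨le_max_left _ _, by linarith [hx.1]⟩
    obtain ⟨s', _, hs'⟩ := hIVT hzmem
    rw [← hs'] at hmz
    exact absurd (hge s') (not_le.2 hmz)
  · have h1' : ξ < T s := hc h1
    set z := min (T s) ξ' with hz
    have hz1 : ξ < z := lt_min h1' hξξ'
    have hz2 : z ≤ ξ' := min_le_right _ _
    have hmz : m z < ν := hξ'lt _ ⟨hz1, hz2⟩
    have hzmem : z ∈ uIcc (T 0) (T s) := by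
      rw [mem_uIcc]; left
      exact ⟨by linarith [hx.2], min_le_left _ _⟩
    obtain ⟨s', _, hs'⟩ := hIVT hzmem
    rw [← hs'] at hmz
    exact absurd (hge s') (not_le.2 hmz)

include hmpos hmeven hν₀ hmξ hmgt hmlt hTc hT'c hsq in
lemma gen_phase1 (hx : T 0 ∈ Ioo (-ξ) ξ) (hT'0 : deriv T 0 < 0)
    {s₁ : ℝ} (h1pos : 0 < s₁) (h1val : T s₁ = -ξ)
    (h1first : ∀ s ∈ Ico 0 s₁, T s ≠ -ξ) :
    ∀ s ∈ Ico 0 s₁, deriv T s < 0 := by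
  have hconf := gen_conf hmpos hmeven hν₀ hmgt hmlt hTc hsq hx
  have hT's₁ : deriv T s₁ = 0 := by
    have h2 := hsq s₁
    have hmm : m (T s₁) = ν := by rw [h1val, hmeven]; exact hmξ
    rw [hmm] at h2
    have hsq0 : (deriv T s₁)^2 = 0 := by
      have hν2 : (0:ℝ) < ν^2 := by positivity
      nlinarith
    exact pow_eq_zero_iff (two_ne_zero) |>.1 hsq0
  set A := Icc 0 s₁ ∩ {s | 0 ≤ deriv T s} with hA
  have hAclosed : IsClosed A :=
    isClosed_Icc.inter (isClosed_le continuous_const hT'c)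
  have hAne : A.Nonempty := ⟨s₁, ⟨⟨h1pos.le, le_rfl⟩, hT's₁.ge⟩⟩
  have hAbdd : BddBelow A := ⟨0, fun s hs => hs.1.1⟩
  have hsA : sInf A ∈ A := hAclosed.csInf_mem hAne hAbdd
  set c := sInf A with hc
  have hmin : ∀ s ∈ Icc 0 s₁, s < c → deriv T s < 0 := by
    intro s hs hlt
    by_contra hge
    push_neg at hge
    exact absurd (csInf_le hAbdd ⟨hs, hge⟩) (not_le.2 hlt)
  have hc0 : 0 < c := by
    rcases (hsA.1.1).lt_or_eq with h | h
    · exact h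
    · exfalso; rw [← h] at hsA; exact absurd hsA.2 (not_le.2 hT'0)
  have hT'c0 : deriv T c = 0 := by
    have h2' : 0 ≤ deriv T c := hsA.2
    rcases h2'.lt_or_eq with h | h
    · exfalso
      have hev : ∀ᶠ r in nhds c, 0 < deriv T r :=
        hT'c.continuousAt.eventually_const_lt h
      rw [Metric.eventually_nhds_iff] at hev
      obtain ⟨ε, hε, hball⟩ := hev
      set r := max 0 (c - ε/2) with hr
      have hr1 : r < c := max_lt hc0 (by linarith)
      have hr2 : 0 ≤ r := le_max_left _ _
      have hrball : dist r c < ε := by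
        rw [Real.dist_eq, abs_of_nonpos (by linarith)]
        have : c - ε/2 ≤ r := le_max_right _ _
        linarith
      have hb := hball hrball
      have hm2 := hmin r ⟨hr2, hr1.le.trans hsA.1.2⟩ hr1
      linarith
    · exact h.symm
  have hanti : StrictAntiOn T (Icc 0 c) := by
    apply strictAntiOn_of_deriv_neg (convex_Icc _ _) hTc.continuousOn
    intro x hxx
    rw [interior_Icc] at hxx
    exact hmin x ⟨hxx.1.le, hxx.2.le.trans hsA.1.2⟩ hxx.2
  have hTlt : T c < T 0 := hanti ⟨le_rfl, hc0.le⟩ ⟨hc0.le, le_rfl⟩ hc0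
  have hmν : m (T c) = ν := gen_T'zero hmpos hν₀ hsq c hT'c0
  have habs : T c = -ξ := by
    rcases ((hconf c).1).lt_or_eq with h | h
    · exfalso
      have : |T c| < ξ := abs_lt.2 ⟨h, by linarith [hx.2]⟩
      exact absurd hmν (ne_of_gt (hmgt _ this))
    · exact h.symm
  have hcs₁ : c = s₁ := by
    rcases hsA.1.2.lt_or_eq with h | h
    · exact absurd habs (h1first c ⟨hsA.1.1, h⟩)
    · exact h
  intro s hs
  exact hmin s ⟨hs.1, hs.2.le⟩ (hcs₁ ▸ hs.2)

include hmpos hmeven hν₀ hmξ hmgt hmlt hTc hT'c hsq in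
lemma gen_phase2 (hx : T 0 ∈ Ioo (-ξ) ξ)
    (hturn : ∀ s, T s = -ξ → ∃ c, 0 < c ∧ HasDerivAt (deriv T) c s)
    {y s₁ s₂ : ℝ} (hy : y ∈ Ioo (-ξ) ξ)
    (h1val : T s₁ = -ξ)
    (h21 : s₁ < s₂) (h2val : T s₂ = y) (h2not : ∀ s ∈ Ioo s₁ s₂, T s ≠ y) :
    ∀ s ∈ Ioc s₁ s₂, 0 < deriv T s := by
  have hconf := gen_conf hmpos hmeven hν₀ hmgt hmlt hTc hsq hx
  have hT's₁ : deriv T s₁ = 0 := by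
    have h2 := hsq s₁
    have hmm : m (T s₁) = ν := by rw [h1val, hmeven]; exact hmξ
    rw [hmm] at h2
    have hsq0 : (deriv T s₁)^2 = 0 := by
      have hν2 : (0:ℝ) < ν^2 := by positivity
      nlinarith
    exact pow_eq_zero_iff (two_ne_zero) |>.1 hsq0
  obtain ⟨cc, hcc0, hccder⟩ := hturn s₁ h1val
  have hslope := hasDerivAt_iff_tendsto_slope.1 hccder
  have hev : ∀ᶠ r in nhdsWithin s₁ (Ioi s₁), 0 < deriv T r := by
    have h1 : ∀ᶠ r in nhdsWithin s₁ {s₁}ᶜ, 0 < slope (deriv T) s₁ r :=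
      hslope.eventually (eventually_gt_nhds hcc0)
    have h2 : nhdsWithin s₁ (Ioi s₁) ≤ nhdsWithin s₁ {s₁}ᶜ :=
      nhdsWithin_mono _ (fun r hr => ne_of_gt hr)
    filter_upwards [h2 h1, self_mem_nhdsWithin] with r hr hrIoi
    have hrs : s₁ < r := hrIoi
    have hslope_eq : slope (deriv T) s₁ r = deriv T r / (r - s₁) := by
      rw [slope_def_field, hT's₁, sub_zero]
    rw [hslope_eq] at hr
    have := mul_pos hr (sub_pos.2 hrs)
    rwa [div_mul_cancel₀ _ (by linarith : r - s₁ ≠ 0)] at this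
  rw [Filter.eventually_iff, mem_nhdsGT_iff_exists_Ioo_subset] at hev
  obtain ⟨uu, huu, hIoo⟩ := hev
  have huu' : s₁ < uu := huu
  intro sb hsb
  by_contra hcon
  push_neg at hcon
  have hsbuu : uu ≤ sb := by
    by_contra h
    push_neg at h
    exact absurd (hIoo ⟨hsb.1, h⟩) (not_lt.2 hcon)
  set p := (s₁ + uu)/2 with hp
  have hp1 : s₁ < p := by simp only [hp]; linarith
  have hp2 : p < uu := by simp only [hp]; linarith
  have hT'p : 0 < deriv T p := hIoo ⟨hp1, hp2⟩
  set B := Icc p sb ∩ {s | deriv T s ≤ 0} with hB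
  have hBclosed : IsClosed B := isClosed_Icc.inter (isClosed_le hT'c continuous_const)
  have hBne : B.Nonempty := ⟨sb, ⟨⟨by linarith, le_rfl⟩, hcon⟩⟩
  have hBbdd : BddBelow B := ⟨p, fun s hs => hs.1.1⟩
  have hcB : sInf B ∈ B := hBclosed.csInf_mem hBne hBbdd
  set c := sInf B with hc
  have hminB : ∀ s ∈ Icc p sb, s < c → 0 < deriv T s := by
    intro s hs hlt
    by_contra hge
    push_neg at hge
    exact absurd (csInf_le hBbdd ⟨hs, hge⟩) (not_le.2 hlt)
  have hpc : p < c := by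
    rcases (hcB.1.1).lt_or_eq with h | h
    · exact h
    · exfalso; rw [← h] at hcB; exact absurd hcB.2 (not_le.2 hT'p)
  have hT'c0 : deriv T c = 0 := by
    have h2' : deriv T c ≤ 0 := hcB.2
    rcases h2'.lt_or_eq with h | h
    · exfalso
      have hev2 : ∀ᶠ r in nhds c, deriv T r < 0 :=
        hT'c.continuousAt.eventually_lt_const h
      rw [Metric.eventually_nhds_iff] at hev2
      obtain ⟨ε, hε, hball⟩ := hev2
      set r := max p (c - ε/2) with hr
      have hr1 : r < c := max_lt hpc (by linarith)
      have hr2 : p ≤ r := le_max_left _ _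
      have hrball : dist r c < ε := by
        rw [Real.dist_eq, abs_of_nonpos (by linarith)]
        have : c - ε/2 ≤ r := le_max_right _ _
        linarith
      have hb := hball hrball
      have hm2 := hminB r ⟨hr2, hr1.le.trans hcB.1.2⟩ hr1
      linarith
    · exact h
  have hmono : StrictMonoOn T (Icc s₁ c) := by
    apply strictMonoOn_of_deriv_pos (convex_Icc _ _) hTc.continuousOn
    intro x hxx
    rw [interior_Icc] at hxx
    rcases le_or_gt x p with hxp | hxp
    · exact hIoo ⟨hxx.1, lt_of_le_of_lt hxp hp2⟩
    · exact hminB x ⟨hxp.le, hxx.2.le.trans hcB.1.2⟩ hxx.2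
  have hs₁c : s₁ < c := lt_trans hp1 hpc
  have hTgt : T s₁ < T c := hmono ⟨le_rfl, hs₁c.le⟩ ⟨hs₁c.le, le_rfl⟩ hs₁c
  have hmν : m (T c) = ν := gen_T'zero hmpos hν₀ hsq c hT'c0
  have habs : T c = ξ := by
    rcases ((hconf c).2).lt_or_eq with h | h
    · exfalso
      have : |T c| < ξ := abs_lt.2 ⟨by rw [h1val] at hTgt; linarith, h⟩
      exact absurd hmν (ne_of_gt (hmgt _ this))
    · exact h
  have hcs₂ : c < s₂ := by
    rcases (hcB.1.2.trans hsb.2).lt_or_eq with h | h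
    · exact h
    · exfalso; rw [h, h2val] at habs; exact absurd habs (ne_of_lt hy.2)
  have hIVT := intermediate_value_Ioo (hs₁c.le) hTc.continuousOn (a := s₁) (b := c)
  have hymem : y ∈ Ioo (T s₁) (T c) := by rw [h1val, habs]; exact hy
  obtain ⟨s', hs', hs'y⟩ := hIVT hymem
  exact absurd hs'y (h2not s' ⟨hs'.1, hs'.2.trans hcs₂⟩)

include hm hmpos hmeven hν₀ hξ0 hmξ hmgt hmlt hTc hT'c hThas hsq in
lemma gen_main (hm'ξ : deriv m ξ < 0)
    (hturn : ∀ s, T s = -ξ → ∃ c, 0 < c ∧ HasDerivAt (deriv T) c s)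
    (hx : T 0 ∈ Ioo (-ξ) ξ) (hT'0 : deriv T 0 < 0)
    {y s₁ s₂ : ℝ} (hy : y ∈ Ioo (-ξ) ξ)
    (h1pos : 0 < s₁) (h1val : T s₁ = -ξ) (h1first : ∀ s ∈ Ico 0 s₁, T s ≠ -ξ)
    (h21 : s₁ < s₂) (h2val : T s₂ = y) (h2not : ∀ s ∈ Ioo s₁ s₂, T s ≠ y) :
    s₂ = (∫ τ in (-ξ)..(T 0), m τ / Real.sqrt ((m τ)^2 - ν^2))
       + (∫ τ in (-ξ)..y, m τ / Real.sqrt ((m τ)^2 - ν^2)) := by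
  set f : ℝ → ℝ := fun t => m t / Real.sqrt ((m t)^2 - ν^2) with hfdef
  set Φ : ℝ → ℝ := fun z => ∫ τ in (-ξ)..z, f τ with hPdef
  have hle : -ξ ≤ ξ := by linarith
  have hfint : IntervalIntegrable f volume (-ξ) ξ :=
    f_int hm hmpos hmeven hν₀ hξ0 hmξ hm'ξ hmgt
  have hfmeas : Measurable f :=
    (m_cont hm).measurable.div
      (continuous_sqrt.comp (((m_cont hm).pow 2).sub continuous_const)).measurable
  have hfint' : ∀ z ∈ Icc (-ξ) ξ, IntervalIntegrable f volume (-ξ) z := by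
    intro z hz
    apply hfint.mono_set
    apply uIcc_subset_uIcc <;> rw [uIcc_of_le hle]
    · exact left_mem_Icc.2 hle
    · exact hz
  have hPderiv : ∀ z ∈ Ioo (-ξ) ξ, HasDerivAt Φ (f z) z := by
    intro z hz
    apply intervalIntegral.integral_hasDerivAt_right (hfint' z ⟨hz.1.le, hz.2.le⟩)
      ⟨univ, Filter.univ_mem, hfmeas.aestronglyMeasurable⟩
    exact f_contAt hm hν₀ hmgt (abs_lt.2 ⟨hz.1, hz.2⟩)
  have hPcont : ContinuousOn Φ (Icc (-ξ) ξ) := by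
    have h := intervalIntegral.continuousOn_primitive_interval
      (a := -ξ) (b := ξ) (μ := volume) (f := f) ?_
    · rwa [uIcc_of_le hle] at h
    · rw [uIcc_of_le hle]
      exact (intervalIntegrable_iff_integrableOn_Icc_of_le hle).1 hfint
  -- Phase 1
  have hph1 := gen_phase1 hmpos hmeven hν₀ hmξ hmgt hmlt hTc hT'c hsq hx hT'0
    h1pos h1val h1first
  have hanti1 : StrictAntiOn T (Icc 0 s₁) := by
    apply strictAntiOn_of_deriv_neg (convex_Icc _ _) hTc.continuousOn
    intro x hxx
    rw [interior_Icc] at hxx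
    exact hph1 x ⟨hxx.1.le, hxx.2⟩
  have hrange1 : ∀ s ∈ Icc 0 s₁, T s ∈ Icc (-ξ) (T 0) := by
    intro s hs
    constructor
    · rw [← h1val]
      exact hanti1.antitoneOn hs ⟨h1pos.le, le_rfl⟩ hs.2
    · exact hanti1.antitoneOn ⟨le_rfl, h1pos.le⟩ hs hs.1
  have hval1 : s₁ = Φ (T 0) := by
    have hkey0 := const_Ico (h := fun s => Φ (T s) + s) h1pos.le ?_ ?_
    · have hkey : Φ (T s₁) + s₁ = Φ (T 0) + 0 := hkey0
      rw [h1val] at hkey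
      have hz : Φ (-ξ) = 0 := intervalIntegral.integral_same
      rw [hz] at hkey
      simpa using hkey
    · apply ContinuousOn.add ?_ continuousOn_id
      apply hPcont.comp hTc.continuousOn
      intro s hs
      have h := hrange1 s hs
      exact ⟨h.1, h.2.trans hx.2.le⟩
    · intro s hs
      have hTs : T s ∈ Ioo (-ξ) ξ := by
        constructor
        · rw [← h1val]
          exact hanti1 ⟨hs.1, hs.2.le⟩ ⟨h1pos.le, le_rfl⟩ hs.2
        · exact lt_of_le_of_lt (hrange1 s ⟨hs.1, hs.2.le⟩).2 hx.2
      have hTders := (hPderiv _ hTs).comp s (hThas s)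
      have hq : m (T s) * deriv T s < 0 :=
        mul_neg_of_pos_of_neg (hmpos _) (hph1 s hs)
      have hsqrt : Real.sqrt ((m (T s))^2 - ν^2) = -(m (T s) * deriv T s) := by
        rw [← hsq s, show (m (T s))^2 * (deriv T s)^2 = (-(m (T s) * deriv T s))^2 by ring]
        exact Real.sqrt_sq (by linarith)
      have heq : f (T s) * deriv T s = -1 := by
        have h1 : f (T s) * deriv T s
            = (m (T s) * deriv T s) / Real.sqrt ((m (T s))^2 - ν^2) := by
          rw [hfdef]; ring
        rw [h1, hsqrt, div_neg, div_self hq.ne]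
      have hfinal := hTders.add (hasDerivAt_id s)
      have : f (T s) * deriv T s + 1 = 0 := by rw [heq]; ring
      rw [this] at hfinal
      exact hfinal
  -- Phase 2
  have hph2 := gen_phase2 hmpos hmeven hν₀ hmξ hmgt hmlt hTc hT'c hsq hx hturn
    hy h1val h21 h2val h2not
  have hmono2 : StrictMonoOn T (Icc s₁ s₂) := by
    apply strictMonoOn_of_deriv_pos (convex_Icc _ _) hTc.continuousOn
    intro x hxx
    rw [interior_Icc] at hxx
    exact hph2 x ⟨hxx.1, hxx.2.le⟩
  have hrange2 : ∀ s ∈ Icc s₁ s₂, T s ∈ Icc (-ξ) y := by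
    intro s hs
    constructor
    · rw [← h1val]
      exact hmono2.monotoneOn ⟨le_rfl, h21.le⟩ hs hs.1
    · rw [← h2val]
      exact hmono2.monotoneOn hs ⟨h21.le, le_rfl⟩ hs.2
  have hval2 : s₂ - s₁ = Φ y := by
    have hkey0 := const_Ioc (h := fun s => Φ (T s) - s) h21.le ?_ ?_
    · have hkey : Φ (T s₂) - s₂ = Φ (T s₁) - s₁ := hkey0
      rw [h1val, h2val] at hkey
      have hz : Φ (-ξ) = 0 := intervalIntegral.integral_same
      rw [hz] at hkey
      linarith [hkey]
    · apply ContinuousOn.sub ?_ continuousOn_id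
      apply hPcont.comp hTc.continuousOn
      intro s hs
      have h := hrange2 s hs
      exact ⟨h.1, h.2.trans hy.2.le⟩
    · intro s hs
      have hTs : T s ∈ Ioo (-ξ) ξ := by
        constructor
        · rw [← h1val]
          exact hmono2 ⟨le_rfl, h21.le⟩ ⟨hs.1.le, hs.2⟩ hs.1
        · exact lt_of_le_of_lt (hrange2 s ⟨hs.1.le, hs.2⟩).2 hy.2
      have hTders := (hPderiv _ hTs).comp s (hThas s)
      have hq : 0 < m (T s) * deriv T s :=
        mul_pos (hmpos _) (hph2 s hs)
      have hsqrt : Real.sqrt ((m (T s))^2 - ν^2) = m (T s) * deriv T s := by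
        rw [← hsq s, show (m (T s))^2 * (deriv T s)^2 = (m (T s) * deriv T s)^2 by ring]
        exact Real.sqrt_sq hq.le
      have heq : f (T s) * deriv T s = 1 := by
        have h1 : f (T s) * deriv T s
            = (m (T s) * deriv T s) / Real.sqrt ((m (T s))^2 - ν^2) := by
          rw [hfdef]; ring
        rw [h1, hsqrt, div_self hq.ne']
      have hfinal := hTders.sub (hasDerivAt_id s)
      have : f (T s) * deriv T s - 1 = 0 := by rw [heq]; ring
      rw [this] at hfinal
      exact hfinal
  have : s₂ = Φ (T 0) + Φ y := by linarith [hval1, hval2]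
  exact this

include hmpos hmeven hν₀ hmgt hmlt hTc hT'c hsq in
lemma gen_exists (hx : T 0 ∈ Ioo (-ξ) ξ) (hT'0 : deriv T 0 < 0)
    {y s₂ : ℝ} (hy : y ∈ Ioo (-ξ) ξ) (hy0 : T 0 < y)
    (hs₂ : IsLeast {s : ℝ | 0 < s ∧ T s = y} s₂) :
    ∃ s₁, 0 < s₁ ∧ s₁ < s₂ ∧ T s₁ = -ξ ∧ (∀ s ∈ Ico 0 s₁, T s ≠ -ξ) := by
  have hconf := gen_conf hmpos hmeven hν₀ hmgt hmlt hTc hsq hx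
  have hs₂pos : 0 < s₂ := hs₂.1.1
  have hTs₂ : T s₂ = y := hs₂.1.2
  have hlt : ∀ s ∈ Ico 0 s₂, T s < y := by
    intro s hs
    by_contra h
    push_neg at h
    rcases h.lt_or_eq with h' | h'
    · have hIVT := intermediate_value_Ioo (hs.1) hTc.continuousOn (a := 0) (b := s)
      obtain ⟨s', hs', hs'y⟩ := hIVT ⟨hy0, h'⟩
      have := hs₂.2 ⟨hs'.1, hs'y⟩
      linarith [hs'.2, hs.2]
    · rcases hs.1.lt_or_eq with h0 | h0
      · have := hs₂.2 ⟨h0, h'.symm⟩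
        linarith [hs.2]
      · rw [← h0] at h'
        linarith [hy0, h'.symm.le]
  have hhit : ∃ s ∈ Icc 0 s₂, T s = -ξ := by
    by_contra hno
    push_neg at hno
    have hT'neg : ∀ s ∈ Ico 0 s₂, deriv T s < 0 := by
      intro s hs
      have habs : |T s| < ξ := by
        rw [abs_lt]
        constructor
        · exact lt_of_le_of_ne (hconf s).1 (Ne.symm (hno s ⟨hs.1, hs.2.le⟩))
        · exact lt_of_lt_of_le (hlt s hs) hy.2.le
      rcases lt_trichotomy (deriv T s) 0 with h | h | h
      · exact h
      · exact absurd h (gen_T'ne hmpos hν₀ hmgt hsq s habs)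
      · exfalso
        have hIVT := intermediate_value_Ioo (hs.1) hT'c.continuousOn (a := 0) (b := s)
        obtain ⟨r, hr, hr0⟩ := hIVT ⟨hT'0, h⟩
        have habsr : |T r| < ξ := by
          rw [abs_lt]
          have hrmem : r ∈ Ico 0 s₂ := ⟨hr.1.le, hr.2.trans hs.2⟩
          constructor
          · exact lt_of_le_of_ne (hconf r).1 (Ne.symm (hno r ⟨hrmem.1, hrmem.2.le⟩))
          · exact lt_of_lt_of_le (hlt r hrmem) hy.2.le
        exact gen_T'ne hmpos hν₀ hmgt hsq r habsr hr0
    have hanti : StrictAntiOn T (Icc 0 s₂) := by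
      apply strictAntiOn_of_deriv_neg (convex_Icc _ _) hTc.continuousOn
      intro x hxx
      rw [interior_Icc] at hxx
      exact hT'neg x ⟨hxx.1.le, hxx.2⟩
    have := hanti ⟨le_rfl, hs₂pos.le⟩ ⟨hs₂pos.le, le_rfl⟩ hs₂pos
    rw [hTs₂] at this
    linarith
  set A := Icc 0 s₂ ∩ {s | T s = -ξ} with hA
  have hAclosed : IsClosed A := isClosed_Icc.inter (isClosed_eq hTc continuous_const)
  have hAne : A.Nonempty := by
    obtain ⟨s, hs1, hs2⟩ := hhit
    exact ⟨s, hs1, hs2⟩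
  have hAbdd : BddBelow A := ⟨0, fun s hs => hs.1.1⟩
  have hs₁A : sInf A ∈ A := hAclosed.csInf_mem hAne hAbdd
  refine ⟨sInf A, ?_, ?_, hs₁A.2, ?_⟩
  · rcases hs₁A.1.1.lt_or_eq with h | h
    · exact h
    · exfalso
      have h2 : T (sInf A) = -ξ := hs₁A.2
      rw [← h] at h2
      exact absurd h2 (ne_of_gt hx.1)
  · rcases hs₁A.1.2.lt_or_eq with h | h
    · exact h
    · exfalso
      have h2 : T (sInf A) = -ξ := hs₁A.2
      rw [h, hTs₂] at h2
      exact absurd h2 (ne_of_gt hy.1)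
  · intro s hs hc
    have : sInf A ≤ s := csInf_le hAbdd ⟨⟨hs.1, hs.2.le.trans hs₁A.1.2⟩, hc⟩
    linarith [hs.2]

end GEN



lemma geo_pack {m : ℝ → ℝ} {γ : ℝ → ℝ × ℝ} {ν : ℝ}
    (hγ : IsUnitGeodesic m γ) (hcl : HasClairaut m γ ν) :
    Continuous (fun s => (γ s).1) ∧
    (∀ s, HasDerivAt (fun s => (γ s).1) (deriv (fun s => (γ s).1) s) s) ∧
    Continuous (deriv (fun s => (γ s).1)) ∧
    (∀ s, HasDerivAt (deriv (fun s => (γ s).1)) (deriv (deriv (fun s => (γ s).1)) s) s) ∧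
    (∀ s, (m ((γ s).1))^2 * (deriv (fun s => (γ s).1) s)^2 = (m ((γ s).1))^2 - ν^2) := by
  have hT2 : ContDiff ℝ 2 (fun s => (γ s).1) := hγ.1.fst
  have hTd : Differentiable ℝ (fun s => (γ s).1) := hT2.differentiable (by norm_num)
  have h12 : ContDiff ℝ ((1:WithTop ℕ∞)+1) (fun s => (γ s).1) := by norm_num; exact hT2
  have hT'1 : ContDiff ℝ 1 (deriv (fun s => (γ s).1)) := (contDiff_succ_iff_deriv.1 h12).2.2
  refine ⟨hT2.continuous, fun s => (hTd s).hasDerivAt, hT'1.continuous,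
    fun s => ((hT'1.differentiable one_ne_zero) s).hasDerivAt, fun s => ?_⟩
  have h1 := hγ.2.2.2 s
  have h2 := hcl s
  linear_combination (m ((γ s).1))^2 * h1 -
    (m ((γ s).1)^2 * deriv (fun u => (γ u).2) s + ν) * h2

lemma wLength_geo {m : ℝ → ℝ} {γ : ℝ → ℝ × ℝ} (hγ : IsUnitGeodesic m γ)
    {a : ℝ} (ha : 0 ≤ a) : wLength m γ 0 a = a := by
  unfold wLength
  have h1 : ∀ s : ℝ, Real.sqrt ((deriv (fun u => (γ u).1) s) ^ 2 +
      (m (γ s).1) ^ 2 * (deriv (fun u => (γ u).2) s) ^ 2) = 1 := by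
    intro s
    rw [hγ.2.2.2 s, Real.sqrt_one]
  simp only [h1]
  simp


end S14

/-- Lemma 5.2: in the situation of Lemma 5.1, the geodesic segments
`α|[0,s₂]` and `β|[0,s₂⁺]` have equal length, both equal to
`l(ν) = 2∫_{-ξ(ν)}^0 m(t)/√(m(t)² - ν²) dt`; in particular `s₂ = s₂⁺`. -/
theorem stmt14 (m : ℝ → ℝ) (hm : ContDiff ℝ (⊤:ℕ∞) m) (hmpos : ∀ t, 0 < m t)
    (hmeven : ∀ t, m (-t) = m t)
    (hK0 : 0 < gaussK m 0) (hKdec : AntitoneOn (gaussK m) (Ici 0))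
    (u : ℝ) (hu : 0 < u) (hut : u < tZero m)
    (ν : ℝ) (hν₁ : infm m < ν) (hν₂ : ν < m u)
    (α β : ℝ → ℝ × ℝ)
    (hα : IsUnitGeodesic m α) (hβ : IsUnitGeodesic m β)
    (hα0 : α 0 = (-u, 0)) (hβ0 : β 0 = (-u, 0))
    (hαcl : HasClairaut m α ν) (hβcl : HasClairaut m β ν)
    (hα' : deriv (fun s => (α s).1) 0 < 0) (hβ' : 0 < deriv (fun s => (β s).1) 0)
    (s₂ s₁p s₂p : ℝ)
    (hs₂ : IsLeast {s : ℝ | 0 < s ∧ (α s).1 = u} s₂)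
    (hs₁p : IsLeast {s : ℝ | 0 < s ∧ (β s).1 = xi m ν} s₁p)
    (hs₂p : IsLeast {s : ℝ | s₁p < s ∧ (β s).1 = u} s₂p) :
    wLength m α 0 s₂ = wLength m β 0 s₂p ∧
    wLength m α 0 s₂ = ell m ν ∧ s₂ = s₂p := by
  
  classical
  -- positivity of ν
  have hinf0 : (0:ℝ) ≤ infm m := le_ciInf fun t => (hmpos t).le
  have hν₀ : 0 < ν := lt_of_le_of_lt hinf0 hν₁
  -- nondegeneracy of tZero
  have hnS : {t : ℝ | 0 < t ∧ deriv m t < 0}.Nonempty := by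
    by_contra h
    rw [not_nonempty_iff_eq_empty] at h
    have ht0 : tZero m = 0 := by unfold tZero; rw [h]; exact Real.sSup_empty
    rw [ht0] at hut; linarith
  have hbdd : BddAbove {t : ℝ | 0 < t ∧ deriv m t < 0} := by
    by_contra h
    have ht0 : tZero m = 0 := Real.sSup_of_not_bddAbove h
    rw [ht0] at hut; linarith
  -- properties of ξ
  obtain ⟨hmξ, huξ, hξt0⟩ := S14.xi_spec hm hmpos hmeven hKdec hnS hν₁ hbdd hu hut hν₂
  set ξ : ℝ := xi m ν with hξdef
  have hξ0 : 0 < ξ := hu.trans huξ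
  have hm'ξ : deriv m ξ < 0 := S14.m'_neg hm hmpos hmeven hKdec hnS ξ hξ0 hξt0
  have hanti := S14.m_anti hm hmpos hmeven hKdec hnS
  have hmgt : ∀ t, |t| < ξ → ν < m t := by
    intro t ht
    have h1 : m ξ < m |t| :=
      hanti ⟨abs_nonneg t, ht.le.trans hξt0.le⟩ ⟨hξ0.le, hξt0.le⟩ ht
    have h2 : m |t| = m t := by
      rcases abs_cases t with h | h
      · rw [h.1]
      · rw [h.1, hmeven]
    rw [hmξ, h2] at h1
    exact h1
  have hmlt : ∃ ξ', ξ < ξ' ∧ ∀ t ∈ Ioc ξ ξ', m t < ν := by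
    refine ⟨tZero m, hξt0, fun t ht => ?_⟩
    have := hanti ⟨hξ0.le, hξt0.le⟩ ⟨hξ0.le.trans ht.1.le, ht.2⟩ ht.1
    rwa [hmξ] at this
  ----------------------------------------------------------------
  -- analysis of α
  obtain ⟨hTcα, hThasα, hT'cα, hT''hasα, hsqα⟩ := S14.geo_pack hα hαcl
  have hα0' : (α 0).1 = -u := by rw [hα0]
  have hxα : (fun s => (α s).1) 0 ∈ Ioo (-ξ) ξ := by
    show (α 0).1 ∈ Ioo (-ξ) ξ
    rw [hα0']
    exact ⟨neg_lt_neg huξ, by linarith⟩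
  have hturnα : ∀ s, (fun s => (α s).1) s = -ξ →
      ∃ c, 0 < c ∧ HasDerivAt (deriv (fun s => (α s).1)) c s := by
    intro s hs
    refine ⟨deriv (deriv (fun s => (α s).1)) s, ?_, hT''hasα s⟩
    have heq := hα.2.1 s
    have hs' : (α s).1 = -ξ := hs
    have hmν : m ((α s).1) = ν := by rw [hs', hmeven]; exact hmξ
    have hm'e : deriv m ((α s).1) = -deriv m ξ := by
      rw [hs']; exact S14.m'_odd hmeven ξ
    have hcls := hαcl s
    rw [hmν] at hcls
    have hθpos : 0 < deriv (fun u => (α u).2) s := by nlinarith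
    rw [heq, hmν, hm'e]
    exact mul_pos (mul_pos hν₀ (neg_pos.2 hm'ξ)) (pow_pos hθpos 2)
  have hyα : u ∈ Ioo (-ξ) ξ := ⟨by linarith, huξ⟩
  have hy0α : (fun s => (α s).1) 0 < u := by
    show (α 0).1 < u
    rw [hα0']; linarith
  have hs₂' : IsLeast {s : ℝ | 0 < s ∧ (fun s => (α s).1) s = u} s₂ := hs₂
  obtain ⟨s₁, h1pos, h1lt, h1val, h1first⟩ :=
    S14.gen_exists hmpos hmeven hν₀ hmgt hmlt hTcα hT'cα hsqα hxα hα' hyα hy0α hs₂'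
  have h2notα : ∀ s ∈ Ioo s₁ s₂, (fun s => (α s).1) s ≠ u := by
    intro s hs hc
    have := hs₂.2 ⟨h1pos.trans hs.1, hc⟩
    linarith [hs.2]
  have hmainα := S14.gen_main hm hmpos hmeven hν₀ hξ0 hmξ hmgt hmlt hTcα hT'cα
    hThasα hsqα hm'ξ hturnα hxα hα' hyα h1pos h1val h1first h1lt hs₂.1.2 h2notα
  have hmainα' : s₂ = (∫ τ in (-ξ)..(-u), m τ / Real.sqrt ((m τ)^2 - ν^2))
      + (∫ τ in (-ξ)..u, m τ / Real.sqrt ((m τ)^2 - ν^2)) := by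
    rw [hα0'] at hmainα
    exact hmainα
  ----------------------------------------------------------------
  -- analysis of β (via the reflected curve T2 = -t ∘ β)
  obtain ⟨hTcβ, hThasβ, hT'cβ, hT''hasβ, hsqβ⟩ := S14.geo_pack hβ hβcl
  have hβ0' : (β 0).1 = -u := by rw [hβ0]
  set T2 : ℝ → ℝ := fun s => -(β s).1 with hT2def
  have hT2c : Continuous T2 := hTcβ.neg
  have hT2'eq : ∀ s, deriv T2 s = -(deriv (fun s => (β s).1) s) := fun s => deriv.neg
  have hT2'funeq : deriv T2 = fun s => -(deriv (fun s => (β s).1) s) := funext hT2'eq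
  have hT2'c : Continuous (deriv T2) := by rw [hT2'funeq]; exact hT'cβ.neg
  have hT2has : ∀ s, HasDerivAt T2 (deriv T2 s) s := by
    intro s
    rw [hT2'eq s]
    exact (hThasβ s).neg
  have hT2''has : ∀ s, HasDerivAt (deriv T2) (-(deriv (deriv (fun s => (β s).1)) s)) s := by
    intro s
    rw [hT2'funeq]
    exact (hT''hasβ s).neg
  have hsqβ2 : ∀ s, (m (T2 s))^2 * (deriv T2 s)^2 = (m (T2 s))^2 - ν^2 := by
    intro s
    have h1 : m (T2 s) = m ((β s).1) := hmeven _
    have h2 : deriv T2 s = -(deriv (fun s => (β s).1) s) := hT2'eq s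
    rw [h1, h2]
    have h3 : (-(deriv (fun s => (β s).1) s))^2 = (deriv (fun s => (β s).1) s)^2 := by ring
    rw [h3]
    exact hsqβ s
  have hturnβ : ∀ s, T2 s = -ξ → ∃ c, 0 < c ∧ HasDerivAt (deriv T2) c s := by
    intro s hs
    have hs' : (β s).1 = ξ := by
      have h : -(β s).1 = -ξ := hs
      linarith
    refine ⟨-(deriv (deriv (fun s => (β s).1)) s), ?_, hT2''has s⟩
    have heq := hβ.2.1 s
    have hmν : m ((β s).1) = ν := by rw [hs']; exact hmξ
    have hm'e : deriv m ((β s).1) = deriv m ξ := by rw [hs']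
    have hcls := hβcl s
    rw [hmν] at hcls
    have hθpos : 0 < deriv (fun u => (β u).2) s := by nlinarith
    rw [heq, hmν, hm'e]
    have hkey : 0 < ν * -deriv m ξ * (deriv (fun u => (β u).2) s)^2 :=
      mul_pos (mul_pos hν₀ (neg_pos.2 hm'ξ)) (pow_pos hθpos 2)
    nlinarith [hkey]
  have hxβ : T2 0 ∈ Ioo (-ξ) ξ := by
    have : T2 0 = u := by rw [hT2def]; simp only; rw [hβ0']; ring
    rw [this]
    exact hyα
  have hT2'0 : deriv T2 0 < 0 := by
    rw [hT2'eq 0]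
    linarith
  have h1valβ : T2 s₁p = -ξ := by
    have h := hs₁p.1.2
    show -(β s₁p).1 = -ξ
    rw [h, hξdef]
  have h1firstβ : ∀ s ∈ Ico 0 s₁p, T2 s ≠ -ξ := by
    intro s hs hc
    have hc' : (β s).1 = ξ := by
      have h : -(β s).1 = -ξ := hc
      linarith
    rcases hs.1.lt_or_eq with h0 | h0
    · have := hs₁p.2 ⟨h0, by rw [hc', hξdef]⟩
      linarith [hs.2]
    · rw [← h0] at hc'
      rw [hβ0'] at hc'
      linarith
  have hyβ : -u ∈ Ioo (-ξ) ξ := ⟨neg_lt_neg huξ, by linarith⟩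
  have h2valβ : T2 s₂p = -u := by
    show -(β s₂p).1 = -u
    rw [hs₂p.1.2]
  have h2notβ : ∀ s ∈ Ioo s₁p s₂p, T2 s ≠ -u := by
    intro s hs hc
    have hc' : (β s).1 = u := by
      have h : -(β s).1 = -u := hc
      linarith
    have := hs₂p.2 ⟨hs.1, hc'⟩
    linarith [hs.2]
  have hmainβ := S14.gen_main hm hmpos hmeven hν₀ hξ0 hmξ hmgt hmlt hT2c hT2'c
    hT2has hsqβ2 hm'ξ hturnβ hxβ hT2'0 hyβ hs₁p.1.1 h1valβ h1firstβ hs₂p.1.1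
    h2valβ h2notβ
  have hmainβ' : s₂p = (∫ τ in (-ξ)..u, m τ / Real.sqrt ((m τ)^2 - ν^2))
      + (∫ τ in (-ξ)..(-u), m τ / Real.sqrt ((m τ)^2 - ν^2)) := by
    have hb : T2 0 = u := by rw [hT2def]; simp only; rw [hβ0']; ring
    rw [hb] at hmainβ
    exact hmainβ
  ----------------------------------------------------------------
  -- the two parameters agree
  have hs2eq : s₂ = s₂p := by rw [hmainα', hmainβ']; ring
  -- value of the integral expression
  have hfint : IntervalIntegrable (fun t => m t / Real.sqrt ((m t)^2 - ν^2))
      MeasureTheory.volume (-ξ) ξ := S14.f_int hm hmpos hmeven hν₀ hξ0 hmξ hm'ξ hmgt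
  have hsub : ∀ a ∈ Icc (-ξ) ξ, ∀ b ∈ Icc (-ξ) ξ,
      IntervalIntegrable (fun t => m t / Real.sqrt ((m t)^2 - ν^2))
      MeasureTheory.volume a b := by
    intro a ha b hb
    apply hfint.mono_set
    have hle : -ξ ≤ ξ := by linarith
    apply uIcc_subset_uIcc <;> rw [uIcc_of_le hle]
    · exact ha
    · exact hb
  have hmem1 : -ξ ∈ Icc (-ξ) ξ := left_mem_Icc.2 (by linarith)
  have hmem2 : -u ∈ Icc (-ξ) ξ := ⟨by linarith, by linarith⟩
  have hmem3 : (0:ℝ) ∈ Icc (-ξ) ξ := ⟨by linarith, by linarith⟩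
  have hmem4 : u ∈ Icc (-ξ) ξ := ⟨by linarith, by linarith⟩
  have e1 := intervalIntegral.integral_add_adjacent_intervals
    (hsub (-ξ) hmem1 (-u) hmem2) (hsub (-u) hmem2 0 hmem3)
  have e2 := intervalIntegral.integral_add_adjacent_intervals
    (hsub (-ξ) hmem1 0 hmem3) (hsub 0 hmem3 u hmem4)
  have e3 := intervalIntegral.integral_comp_neg (a := (0:ℝ)) (b := u)
    (fun t => m t / Real.sqrt ((m t)^2 - ν^2))
  simp only [hmeven, neg_zero] at e3
  have hellval : s₂ = ell m ν := by
    rw [hmainα']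
    unfold ell
    rw [← hξdef]
    linarith [e1, e2, e3]
  ----------------------------------------------------------------
  -- lengths
  have hlenα : wLength m α 0 s₂ = s₂ := S14.wLength_geo hα hs₂.1.1.le
  have hlenβ : wLength m β 0 s₂p = s₂p :=
    S14.wLength_geo hβ (hs₁p.1.1.trans hs₂p.1.1).le
  refine ⟨?_, ?_, hs2eq⟩
  · rw [hlenα, hlenβ, hs2eq]
  · rw [hlenα, hellval]
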